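/- arXiv:1311.0116 — 2 statements merged into one kernel-verified Lean document; each statement's English description precedes it below -/
import Mathlib

section
/- Let L_k be the Laplacian of a connected graph on n vertices, K^I diagonal with positive entries, D and K^P diagonal matrices, and p^m ∈ ℝ^n, ω_ref ∈ ℝ arbitrary. Then the equation L_k δ - k K^I 1 = -p^m + (D+K^P) 1 ω_ref has a solution (δ, k) ∈ ℝ^n × ℝ. -/
open Matrix

/-- The equation `L δ - k Kᴵ 1 = -pᵐ + (D + Kᴾ) 1 ω_ref` has a solution `(δ, k)`. -/
theorem stmt3 (n : ℕ) (L KI D KP : Matrix (Fin n) (Fin n) ℝ)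
    (hL : L.PosSemidef)
    (hL1 : L *ᵥ (fun _ => (1 : ℝ)) = 0)
    (hker : ∀ x : Fin n → ℝ, L *ᵥ x = 0 → ∃ c : ℝ, x = fun _ => c)
    (hKI : KI.IsDiag) (hKIpos : ∀ i, 0 < KI i i)
    (hD : D.IsDiag) (hKP : KP.IsDiag)
    (pm : Fin n → ℝ) (ωref : ℝ) :
    ∃ (δ : Fin n → ℝ) (k : ℝ),
      L *ᵥ δ - k • (KI *ᵥ (fun _ => (1 : ℝ))) =
        -pm + ωref • ((D + KP) *ᵥ (fun _ => (1 : ℝ))) := by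
  rcases Nat.eq_zero_or_pos n with hn | hn
  · subst hn
    exact ⟨0, 0, funext fun i => i.elim0⟩
  -- notation
  set v : Fin n → ℝ := fun _ => (1 : ℝ) with hv
  have hvne : v ≠ 0 := by
    intro h
    have := congrFun h ⟨0, hn⟩
    simp [hv] at this
  set w : Fin n → ℝ := KI *ᵥ v with hw
  have hvw : v ⬝ᵥ w > 0 := by
    have : v ⬝ᵥ w = ∑ i, ∑ j, KI i j := by
      simp [hw, dotProduct, Matrix.mulVec, hv]
    rw [this]
    have : ∀ i, ∑ j, KI i j = KI i i := by
      intro i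
      rw [Finset.sum_eq_single i]
      · intro j _ hj; exact hKI (Ne.symm hj)
      · simp
    rw [Finset.sum_congr rfl (fun i _ => this i)]
    exact Finset.sum_pos (fun i _ => hKIpos i) ⟨⟨0, hn⟩, Finset.mem_univ _⟩
  set b : Fin n → ℝ := -pm + ωref • ((D + KP) *ᵥ v) with hb
  set k : ℝ := -(v ⬝ᵥ b) / (v ⬝ᵥ w) with hk
  -- the linear functional y ↦ v ⬝ᵥ y
  let f : (Fin n → ℝ) →ₗ[ℝ] ℝ :=
    { toFun := fun y => v ⬝ᵥ y
      map_add' := fun x y => dotProduct_add v x y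
      map_smul' := fun c y => by simp [dotProduct_smul] }
  have hfv : f v = (n : ℝ) := by simp [f, dotProduct, hv]
  have hfne : f ≠ 0 := by
    intro h
    have := congrFun (congrArg DFunLike.coe h) v
    rw [hfv] at this
    simp at this
    omega
  -- kernel of L.mulVecLin is span {v}
  have hkerL : LinearMap.ker L.mulVecLin = Submodule.span ℝ {v} := by
    apply le_antisymm
    · intro x hx
      obtain ⟨c, hc⟩ := hker x (by simpa using hx)
      have : x = c • v := by funext i; simp [hc, hv]
      rw [this]
      exact Submodule.smul_mem _ _ (Submodule.mem_span_singleton_self v)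
    · rw [Submodule.span_le, Set.singleton_subset_iff]
      simpa using hL1
  have hdimker : Module.finrank ℝ (LinearMap.ker L.mulVecLin) = 1 := by
    rw [hkerL]; exact finrank_span_singleton hvne
  have hrn := LinearMap.finrank_range_add_finrank_ker L.mulVecLin
  have hdimtot : Module.finrank ℝ (Fin n → ℝ) = n := by simp
  have hdimrange : Module.finrank ℝ (LinearMap.range L.mulVecLin) = n - 1 := by
    rw [hdimker, hdimtot] at hrn; omega
  -- dim of ker f is n - 1
  have hrangef : Module.finrank ℝ (LinearMap.range f) = 1 := by
    have : LinearMap.range f = ⊤ := by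
      rw [LinearMap.range_eq_top]
      intro r
      refine ⟨(r / n) • v, ?_⟩
      have hn' : (n : ℝ) ≠ 0 := Nat.cast_ne_zero.mpr (by omega)
      rw [_root_.map_smul, hfv, smul_eq_mul]
      field_simp
    rw [this]; simp
  have hrnf := LinearMap.finrank_range_add_finrank_ker f
  have hdimkerf : Module.finrank ℝ (LinearMap.ker f) = n - 1 := by
    rw [hrangef, hdimtot] at hrnf; omega
  -- range L ⊆ ker f
  have hle : LinearMap.range L.mulVecLin ≤ LinearMap.ker f := by
    rintro _ ⟨x, rfl⟩
    have hsymm : L.IsHermitian := hL.1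
    have : f (L.mulVecLin x) = (v ᵥ* L) ⬝ᵥ x := by
      simp [f, Matrix.mulVecLin_apply, Matrix.dotProduct_mulVec]
    rw [LinearMap.mem_ker, this]
    have : v ᵥ* L = L *ᵥ v := by
      rw [← Matrix.mulVec_transpose]
      rw [← Matrix.conjTranspose_eq_transpose_of_trivial, hsymm]
    rw [this, hL1]
    simp
  have heq : LinearMap.range L.mulVecLin = LinearMap.ker f :=
    Submodule.eq_of_le_of_finrank_eq hle (by rw [hdimrange, hdimkerf])
  -- the target vector b + k • w is in ker f
  have hmem : b + k • w ∈ LinearMap.ker f := by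
    rw [LinearMap.mem_ker]
    have : f (b + k • w) = v ⬝ᵥ b + k * (v ⬝ᵥ w) := by
      simp [f, dotProduct_add, dotProduct_smul, smul_eq_mul]
    rw [this, hk]
    field_simp
    ring
  rw [← heq] at hmem
  obtain ⟨δ, hδ⟩ := hmem
  refine ⟨δ, k, ?_⟩
  have h2 : L *ᵥ δ = b + k • w := hδ
  rw [sub_eq_iff_eq_add]
  exact h2
end

section
/- Let F ∈ ℝ^{N×N}, C ∈ ℝ^{m×N}, and suppose every eigenvalue λ of F with Re(λ) ≥ 0 has its generalized eigenspace contained in the unobservable subspace of (F, C) (i.e., in ker of the observability matrix). If ẋ = Fx + b for a constant vector b, and the system has an equilibrium x* with Fx* + b = 0, then for every solution x(t), the output y(t) = Cx(t) converges to Cx* as t → ∞. -/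
open Matrix Filter

noncomputable def modeW {N : ℕ} (Fc : Matrix (Fin N) (Fin N) ℂ) (μ : ℂ) (v : Fin N → ℂ)
    (t : ℝ) : Fin N → ℂ :=
  Complex.exp (t * μ) •
    ∑ k ∈ Finset.range N, (((t : ℂ) ^ k / k.factorial) • ((Fc - μ • 1) ^ k *ᵥ v))

lemma modeW_zero {N : ℕ} (Fc : Matrix (Fin N) (Fin N) ℂ) (μ : ℂ) (v : Fin N → ℂ) :
    modeW Fc μ v 0 = v := by
  unfold modeW
  rcases N with _ | M
  · simpa using (Subsingleton.elim _ v)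
  · rw [Finset.sum_range_succ']
    simp

lemma mulVec_sum' {N p : ℕ} (A : Matrix (Fin p) (Fin N) ℂ) (s : Finset ℕ)
    (g : ℕ → Fin N → ℂ) : A *ᵥ (∑ k ∈ s, g k) = ∑ k ∈ s, A *ᵥ g k := by
  simp only [← Matrix.mulVecLin_apply]
  exact map_sum A.mulVecLin g s

lemma modeW_deriv {N : ℕ} (Fc : Matrix (Fin N) (Fin N) ℂ) (μ : ℂ) (v : Fin N → ℂ)
    (hv : ((Fc - μ • 1) ^ N) *ᵥ v = 0) (t : ℝ) :
    HasDerivAt (modeW Fc μ v) (Fc *ᵥ modeW Fc μ v t) t := by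
  set u : ℕ → Fin N → ℂ := fun k => (Fc - μ • 1) ^ k *ᵥ v with hu
  have hE : HasDerivAt (fun s : ℝ => Complex.exp (s * μ)) (μ * Complex.exp (t * μ)) t := by
    have h1 : HasDerivAt (fun z : ℂ => Complex.exp (z * μ)) (Complex.exp ((t : ℂ) * μ) * μ)
        (t : ℂ) := by
      simpa using ((hasDerivAt_id ((t : ℂ))).mul_const μ).cexp
    simpa [mul_comm] using h1.comp_ofReal
  have hS : HasDerivAt (fun s : ℝ => ∑ k ∈ Finset.range N, (((s : ℂ)) ^ k / k.factorial) • u k)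
      (∑ k ∈ Finset.range N, (((k : ℂ) * (t : ℂ) ^ (k - 1) / k.factorial) • u k)) t := by
    apply HasDerivAt.fun_sum
    intro k _
    exact (((hasDerivAt_pow k ((t : ℂ))).div_const _).comp_ofReal).smul_const (u k)
  have hcomb := hE.fun_smul hS
  have hF : ∀ k, Fc *ᵥ u k = u (k + 1) + μ • u k := by
    intro k
    have h2 : Fc * (Fc - μ • 1) ^ k = (Fc - μ • 1) ^ (k + 1) + μ • (Fc - μ • 1) ^ k := by
      rw [pow_succ']
      rw [sub_mul, smul_mul_assoc, one_mul]
      abel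
    rw [hu]
    rw [Matrix.mulVec_mulVec, h2, Matrix.add_mulVec, Matrix.smul_mulVec]
  have key : (∑ k ∈ Finset.range N, ((t : ℂ) ^ k / k.factorial) • u (k + 1))
      = ∑ k ∈ Finset.range N, (((k : ℂ) * (t : ℂ) ^ (k - 1) / k.factorial) • u k) := by
    rcases N with _ | M
    · simp
    · rw [Finset.sum_range_succ, Finset.sum_range_succ']
      have hu0 : u (M + 1) = 0 := hv
      rw [hu0, smul_zero, add_zero]
      have h0 : (((0 : ℕ) : ℂ) * (t : ℂ) ^ (0 - 1) / (0 : ℕ).factorial) • u 0 = 0 := by simp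
      rw [h0, add_zero]
      refine Finset.sum_congr rfl fun k hk => ?_
      congr 1
      have h1 : (((k + 1 : ℕ).factorial : ℂ)) = ((k + 1 : ℕ) : ℂ) * ((k.factorial : ℕ) : ℂ) := by
        rw [Nat.factorial_succ]; push_cast; ring
      have h2 : ((k.factorial : ℕ) : ℂ) ≠ 0 := Nat.cast_ne_zero.mpr k.factorial_ne_zero
      have h3 : ((k + 1 : ℕ) : ℂ) ≠ 0 := Nat.cast_ne_zero.mpr (Nat.succ_ne_zero k)
      simp only [Nat.add_sub_cancel]
      rw [h1]
      exact (mul_div_mul_left _ _ h3).symm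
  refine hcomb.congr_deriv (Eq.symm ?_)
  unfold modeW
  rw [Matrix.mulVec_smul, mulVec_sum']
  have : ∀ k ∈ Finset.range N, Fc *ᵥ (((t : ℂ) ^ k / k.factorial) • u k)
      = ((t : ℂ) ^ k / k.factorial) • u (k + 1) + μ • (((t : ℂ) ^ k / k.factorial) • u k) := by
    intro k _
    rw [Matrix.mulVec_smul, hF k, smul_add, smul_comm]
  rw [Finset.sum_congr rfl this, Finset.sum_add_distrib, key]
  rw [smul_add, ← Finset.smul_sum, smul_smul, mul_comm (Complex.exp (↑t * μ)) μ, ← smul_smul]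


section helpers
variable {N p : ℕ}

lemma ker_obs (Fc : Matrix (Fin N) (Fin N) ℂ) (Cc : Matrix (Fin p) (Fin N) ℂ) (μ : ℂ)
    (v : Fin N → ℂ) (hCF : ∀ j, j < N → Cc *ᵥ (Fc ^ j *ᵥ v) = 0) :
    ∀ k j, j + k < N → Cc *ᵥ ((Fc - μ • 1) ^ k *ᵥ (Fc ^ j *ᵥ v)) = 0 := by
  intro k
  induction k with
  | zero => intro j hj; simpa using hCF j (by omega)
  | succ k ih =>
    intro j hj
    have h1 : (Fc - μ • 1) ^ (k + 1) *ᵥ (Fc ^ j *ᵥ v)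
        = (Fc - μ • 1) ^ k *ᵥ (Fc ^ (j + 1) *ᵥ v)
          - μ • ((Fc - μ • 1) ^ k *ᵥ (Fc ^ j *ᵥ v)) := by
      rw [pow_succ, ← Matrix.mulVec_mulVec, Matrix.sub_mulVec, Matrix.smul_mulVec,
        Matrix.one_mulVec, Matrix.mulVec_mulVec, ← pow_succ', Matrix.mulVec_sub,
        Matrix.mulVec_smul]
    rw [h1, Matrix.mulVec_sub, Matrix.mulVec_smul, ih (j + 1) (by omega), ih j (by omega),
      smul_zero, sub_zero]

lemma cexp_pow_decay (μ : ℂ) (hre : μ.re < 0) (k : ℕ) :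
    Tendsto (fun t : ℝ => Complex.exp (t * μ) * (t : ℂ) ^ k) atTop (nhds 0) := by
  have ha0 : (0 : ℝ) < -μ.re := by linarith
  have h1 : Tendsto (fun t : ℝ => t ^ k * Real.exp (-(-μ.re * t))) atTop (nhds 0) := by
    have h2 := Real.tendsto_pow_mul_exp_neg_atTop_nhds_zero k
    have h3 : Tendsto (fun t : ℝ => -μ.re * t) atTop atTop :=
      Tendsto.const_mul_atTop ha0 tendsto_id
    have h4 := (h2.comp h3).const_mul ((-μ.re) ^ k)⁻¹
    rw [mul_zero] at h4
    refine h4.congr fun t => ?_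
    simp only [Function.comp_apply, mul_pow]
    field_simp
  apply squeeze_zero_norm' ?_ h1
  filter_upwards [eventually_ge_atTop (0 : ℝ)] with t ht
  rw [norm_mul, norm_pow, Complex.norm_exp,
    Complex.norm_of_nonneg ht]
  have : (((t : ℝ) : ℂ) * μ).re = t * μ.re := by simp
  rw [this]
  rw [mul_comm]
  apply le_of_eq
  congr 1
  rw [neg_mul, neg_neg, mul_comm]
end helpers


section helpers
variable {N p : ℕ}

lemma Cc_modeW_zero (Fc : Matrix (Fin N) (Fin N) ℂ) (Cc : Matrix (Fin p) (Fin N) ℂ) (μ : ℂ)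
    (v : Fin N → ℂ) (hker : ∀ k, k < N → Cc *ᵥ ((Fc - μ • 1) ^ k *ᵥ v) = 0) (t : ℝ) :
    Cc *ᵥ modeW Fc μ v t = 0 := by
  unfold modeW
  rw [Matrix.mulVec_smul, mulVec_sum']
  have h : ∀ k ∈ Finset.range N,
      Cc *ᵥ (((t : ℂ) ^ k / k.factorial) • ((Fc - μ • 1) ^ k *ᵥ v)) = 0 := by
    intro k hk
    rw [Matrix.mulVec_smul, hker k (Finset.mem_range.mp hk), smul_zero]
  rw [Finset.sum_eq_zero h, smul_zero]

lemma Cc_modeW_tendsto (Fc : Matrix (Fin N) (Fin N) ℂ) (Cc : Matrix (Fin p) (Fin N) ℂ) (μ : ℂ)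
    (v : Fin N → ℂ) (hre : μ.re < 0) :
    Tendsto (fun t : ℝ => Cc *ᵥ modeW Fc μ v t) atTop (nhds 0) := by
  have hform : ∀ t : ℝ, Cc *ᵥ modeW Fc μ v t
      = ∑ k ∈ Finset.range N, (Complex.exp (t * μ) * (t : ℂ) ^ k) •
          (((k.factorial : ℂ))⁻¹ • (Cc *ᵥ ((Fc - μ • 1) ^ k *ᵥ v))) := by
    intro t
    unfold modeW
    rw [Matrix.mulVec_smul, mulVec_sum', Finset.smul_sum]
    refine Finset.sum_congr rfl fun k hk => ?_
    rw [Matrix.mulVec_smul, smul_smul, smul_smul]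
    congr 1
    rw [div_eq_mul_inv]
    ring
  have h : Tendsto (fun t : ℝ => ∑ k ∈ Finset.range N, (Complex.exp (t * μ) * (t : ℂ) ^ k) •
      (((k.factorial : ℂ))⁻¹ • (Cc *ᵥ ((Fc - μ • 1) ^ k *ᵥ v)))) atTop (nhds 0) := by
    have := tendsto_finset_sum (Finset.range N) (fun k _ =>
      (cexp_pow_decay μ hre k).smul_const (((k.factorial : ℂ))⁻¹ •
        (Cc *ᵥ ((Fc - μ • 1) ^ k *ᵥ v))))
    simpa using this
  exact h.congr fun t => (hform t).symm

lemma map_mulVec_ofReal {q : ℕ} (M : Matrix (Fin p) (Fin q) ℝ) (u : Fin q → ℝ) :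
    (M.map Complex.ofReal) *ᵥ (fun j => ((u j : ℝ) : ℂ)) = fun i => (((M *ᵥ u) i : ℝ) : ℂ) := by
  funext i
  simp only [Matrix.mulVec, dotProduct, Matrix.map_apply]
  push_cast
  rfl

end helpers


/-- If every eigenvalue of `F` with nonnegative real part has its generalized
eigenspace contained in the unobservable subspace of `(F, C)`, then for the affine system
`ẋ = Fx + b` with equilibrium `x*` (`Fx* + b = 0`), the output `y(t) = Cx(t)` of every
solution converges to `Cx*`. -/
theorem stmt17 (N m : ℕ) (F : Matrix (Fin N) (Fin N) ℝ) (C : Matrix (Fin m) (Fin N) ℝ)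
    (hobs : ∀ lam : ℂ, 0 ≤ lam.re →
      ∀ v : Fin N → ℂ, ((F.map Complex.ofReal - lam • 1) ^ N) *ᵥ v = 0 →
        ∀ k : Fin N, ((C.map Complex.ofReal) * (F.map Complex.ofReal) ^ (k : ℕ)) *ᵥ v = 0)
    (b : Fin N → ℝ) (xstar : Fin N → ℝ) (hstar : F *ᵥ xstar + b = 0)
    (x : ℝ → Fin N → ℝ) (hx : ∀ t : ℝ, HasDerivAt x (F *ᵥ x t + b) t) :
    Tendsto (fun t => C *ᵥ x t) atTop (nhds (C *ᵥ xstar)) := by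
  classical
  set Fc := F.map Complex.ofReal with hFc
  set Cc := C.map Complex.ofReal with hCc
  set zc : ℝ → Fin N → ℂ := fun t j => ((x t j - xstar j : ℝ) : ℂ) with hzcdef
  have hstar' : F *ᵥ xstar = -b := by
    rw [← add_eq_zero_iff_eq_neg] at *; exact hstar
  have hzc : ∀ t, Fc *ᵥ zc t = fun i => (((F *ᵥ x t + b) i : ℝ) : ℂ) := by
    intro t
    have h1 : zc t = fun j => (((x t - xstar) j : ℝ) : ℂ) := rfl
    rw [h1, hFc, map_mulVec_ofReal]
    have h2 : F *ᵥ (x t - xstar) = F *ᵥ x t + b := by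
      rw [Matrix.mulVec_sub, hstar', sub_neg_eq_add]
    rw [h2]
  have hz0 : ∀ t, HasDerivAt zc (Fc *ᵥ zc t) t := by
    intro t
    rw [hasDerivAt_pi]
    intro i
    have hxi : HasDerivAt (fun s => x s i) ((F *ᵥ x t + b) i) t := hasDerivAt_pi.mp (hx t) i
    have h3 : HasDerivAt (fun s : ℝ => ((x s i - xstar i : ℝ) : ℂ))
        ((((F *ᵥ x t + b) i : ℝ) : ℂ)) t := (hxi.sub_const _).ofReal_comp
    rw [hzc t]
    exact h3
  -- generalized eigenspace decomposition
  set f : Module.End ℂ (Fin N → ℂ) := Matrix.toLinAlgEquiv' Fc with hf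
  have hNpow : ∀ (μ : ℂ) (v : Fin N → ℂ), v ∈ f.maxGenEigenspace μ →
      ((Fc - μ • 1) ^ N) *ᵥ v = 0 := by
    intro μ v hvmem
    rw [Module.End.maxGenEigenspace_eq_genEigenspace_finrank,
      Module.finrank_fin_fun ℂ, Module.End.mem_genEigenspace_nat, LinearMap.mem_ker] at hvmem
    have h4 : (f - μ • 1) ^ N = Matrix.toLinAlgEquiv' ((Fc - μ • 1) ^ N) := by
      rw [map_pow, map_sub, _root_.map_smul, _root_.map_one]
    rw [h4, Matrix.toLinAlgEquiv'_apply] at hvmem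
    exact hvmem
  have htop : zc 0 ∈ ⨆ μ : ℂ, f.maxGenEigenspace μ := by
    rw [Module.End.iSup_maxGenEigenspace_eq_top]; trivial
  -- the key property
  have hP : ∃ w : ℝ → Fin N → ℂ, w 0 = zc 0 ∧ (∀ t, HasDerivAt w (Fc *ᵥ w t) t) ∧
      Tendsto (fun t => Cc *ᵥ w t) atTop (nhds 0) := by
    refine Submodule.iSup_induction (motive := fun z => ∃ w : ℝ → Fin N → ℂ, w 0 = z ∧
      (∀ t, HasDerivAt w (Fc *ᵥ w t) t) ∧ Tendsto (fun t => Cc *ᵥ w t) atTop (nhds 0))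
      _ htop ?_ ?_ ?_
    · intro μ v hv
      have hvN : ((Fc - μ • 1) ^ N) *ᵥ v = 0 := hNpow μ v hv
      refine ⟨modeW Fc μ v, modeW_zero Fc μ v, modeW_deriv Fc μ v hvN, ?_⟩
      by_cases hre : 0 ≤ μ.re
      · have hCF : ∀ j, j < N → Cc *ᵥ (Fc ^ j *ᵥ v) = 0 := by
          intro j hj
          have h := hobs μ hre v hvN ⟨j, hj⟩
          rwa [← Matrix.mulVec_mulVec] at h
        have hker : ∀ k, k < N → Cc *ᵥ ((Fc - μ • 1) ^ k *ᵥ v) = 0 := by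
          intro k hk
          have h := ker_obs Fc Cc μ v hCF k 0 (by omega)
          simpa using h
        have h5 : (fun t : ℝ => Cc *ᵥ modeW Fc μ v t) = fun _ => 0 := by
          funext t; exact Cc_modeW_zero Fc Cc μ v hker t
        rw [h5]
        exact tendsto_const_nhds
      · exact Cc_modeW_tendsto Fc Cc μ v (by linarith [not_le.mp hre])
    · exact ⟨fun _ => 0, rfl, fun t => by
        simpa [Matrix.mulVec_zero] using hasDerivAt_const t (0 : Fin N → ℂ),
        by simp [Matrix.mulVec_zero]⟩
    · rintro z₁ z₂ ⟨w₁, hw₁0, hw₁d, hw₁t⟩ ⟨w₂, hw₂0, hw₂d, hw₂t⟩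
      refine ⟨fun t => w₁ t + w₂ t, by show w₁ 0 + w₂ 0 = _; rw [hw₁0, hw₂0], fun t => ?_, ?_⟩
      · simpa [Matrix.mulVec_add] using (hw₁d t).fun_add (hw₂d t)
      · have := hw₁t.add hw₂t
        simp only [add_zero] at this
        exact this.congr fun t => by rw [Matrix.mulVec_add]
  obtain ⟨w, hw0, hwd, hwt⟩ := hP
  -- uniqueness of ODE solutions
  set L : (Fin N → ℂ) →L[ℂ] (Fin N → ℂ) :=
    LinearMap.toContinuousLinearMap (Matrix.mulVecLin Fc) with hL
  have hlip : ∀ t : ℝ, LipschitzWith ‖L‖₊ (fun y : Fin N → ℂ => Fc *ᵥ y) := by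
    intro t
    have h6 := L.lipschitz
    have h7 : ⇑L = fun y : Fin N → ℂ => Fc *ᵥ y := by
      funext y
      simp [hL, Matrix.mulVecLin_apply]
    rwa [h7] at h6
  have huniq : ∀ T : ℝ, 0 ≤ T → zc T = w T := by
    intro T hT
    have := ODE_solution_unique (v := fun _ y => Fc *ᵥ y) hlip
      (f := zc) (g := w) (a := 0) (b := T)
      ((continuous_iff_continuousAt.mpr fun t => (hz0 t).continuousAt).continuousOn)
      (fun t _ => (hz0 t).hasDerivWithinAt)
      ((continuous_iff_continuousAt.mpr fun t => (hwd t).continuousAt).continuousOn)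
      (fun t _ => (hwd t).hasDerivWithinAt)
      hw0.symm
    exact this ⟨hT, le_rfl⟩
  have h6 : Tendsto (fun t => Cc *ᵥ zc t) atTop (nhds 0) := by
    refine hwt.congr' ?_
    filter_upwards [eventually_ge_atTop (0 : ℝ)] with t ht
    rw [huniq t ht]
  -- back to ℝ
  have h7 : ∀ t, Cc *ᵥ zc t = fun i => (((C *ᵥ x t - C *ᵥ xstar) i : ℝ) : ℂ) := by
    intro t
    have h1 : zc t = fun j => (((x t - xstar) j : ℝ) : ℂ) := rfl
    rw [h1, hCc, map_mulVec_ofReal, Matrix.mulVec_sub]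
  have h8 : Tendsto (fun t => C *ᵥ x t - C *ᵥ xstar) atTop (nhds 0) := by
    rw [tendsto_pi_nhds]
    intro i
    have h9 : Tendsto (fun t => (((C *ᵥ x t - C *ᵥ xstar) i : ℝ) : ℂ)) atTop (nhds 0) := by
      have h10 := tendsto_pi_nhds.mp h6 i
      refine h10.congr fun t => ?_
      rw [h7 t]
    have h11 := (Complex.continuous_re.tendsto 0).comp h9
    simpa [Function.comp_def] using h11
  have h12 := h8.add (tendsto_const_nhds (x := C *ᵥ xstar) (f := atTop))
  simpa using h12
end
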